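/- Let k be a field of characteristic ≠ 2, let n ≥ 1, and let f ∈ k[X_2,…,X_n] (a polynomial not involving X_1). For g ∈ k[X_2,…,X_n] let E_g be the k-algebra automorphism of k[X_1,…,X_n] with E_g(X_1) = X_1 + g and E_g(X_j) = X_j for j ≥ 2, and let L be the linear automorphism with L(X_1) = 2X_1 and L(X_j) = X_j for j ≥ 2. Then E_{−2f} = E_{2f}^{−1} and E_f = (E_{2f}∘L∘E_{−2f})∘L^{−1}; in particular the elementary automorphism E_f is a product of two linearizable automorphisms, namely the conjugate E_{2f}∘L∘E_{2f}^{−1} of L and the linear map L^{−1}. -/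

import Mathlib

open MvPolynomial

/-- An algebra endomorphism fixing every `X j` with `j ∈ s` fixes every polynomial
supported in `s`. -/
lemma fix_of_supported {k : Type*} [CommSemiring k] {σ : Type*}
    (φ : MvPolynomial σ k →ₐ[k] MvPolynomial σ k) (s : Set σ)
    (hφ : ∀ j ∈ s, φ (X j) = X j) {p : MvPolynomial σ k}
    (hp : p ∈ MvPolynomial.supported k s) : φ p = p := by
  refine Algebra.adjoin_induction ?_ ?_ ?_ ?_ hp
  · rintro x ⟨j, hj, rfl⟩
    exact hφ j hj
  · intro r
    simp
  · intro x y _ _ hx hy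
    simp [map_add, hx, hy]
  · intro x y _ _ hx hy
    simp [map_mul, hx, hy]

theorem nagata_stmt_16 (k : Type*) [Field k] (h2 : (2 : k) ≠ 0)
    (n : ℕ) (hn : 1 ≤ n) (i₁ : Fin n) (hi₁ : i₁ = ⟨0, hn⟩)
    (f : MvPolynomial (Fin n) k)
    (hf : f ∈ MvPolynomial.supported k {j : Fin n | j ≠ i₁})
    (Ef E2f Em2f : MvPolynomial (Fin n) k ≃ₐ[k] MvPolynomial (Fin n) k)
    (hEf1 : Ef (X i₁) = X i₁ + f) (hEf2 : ∀ j, j ≠ i₁ → Ef (X j) = X j)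
    (hE2f1 : E2f (X i₁) = X i₁ + 2 * f) (hE2f2 : ∀ j, j ≠ i₁ → E2f (X j) = X j)
    (hEm2f1 : Em2f (X i₁) = X i₁ - 2 * f) (hEm2f2 : ∀ j, j ≠ i₁ → Em2f (X j) = X j)
    (L : MvPolynomial (Fin n) k ≃ₐ[k] MvPolynomial (Fin n) k)
    (hL1 : L (X i₁) = 2 * X i₁) (hL2 : ∀ j, j ≠ i₁ → L (X j) = X j) :
    Em2f = E2f.symm ∧
    ∀ p : MvPolynomial (Fin n) k, Ef p = E2f (L (Em2f (L.symm p))) := by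
  have hE2ff : E2f f = f := fix_of_supported E2f.toAlgHom _ (fun j hj => hE2f2 j hj) hf
  have hEm2ff : Em2f f = f := fix_of_supported Em2f.toAlgHom _ (fun j hj => hEm2f2 j hj) hf
  have hLf : L f = f := fix_of_supported L.toAlgHom _ (fun j hj => hL2 j hj) hf
  have hC : ∀ (c : k), L (C c) = C c := fun c => by
    simpa [MvPolynomial.algebraMap_eq] using L.commutes c
  have hCE : ∀ (c : k), E2f (C c) = C c := fun c => by
    simpa [MvPolynomial.algebraMap_eq] using E2f.commutes c
  have hCEm : ∀ (c : k), Em2f (C c) = C c := fun c => by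
    simpa [MvPolynomial.algebraMap_eq] using Em2f.commutes c
  have hCC : (C (2:k)⁻¹ : MvPolynomial (Fin n) k) * 2 = 1 := by
    have h2C : ((2:MvPolynomial (Fin n) k)) = C (2:k) := (map_ofNat C 2).symm
    rw [h2C, ← C_mul, inv_mul_cancel₀ h2, C_1]
  have h2E : E2f (2 : MvPolynomial (Fin n) k) = 2 := by
    rw [← map_ofNat C 2, hCE, map_ofNat]
  have h2L : L (2 : MvPolynomial (Fin n) k) = 2 := by
    rw [← map_ofNat C 2, hC, map_ofNat]
  have hLs1 : L.symm (X i₁) = C (2:k)⁻¹ * X i₁ := by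
    apply L.injective
    rw [L.apply_symm_apply, map_mul, hC, hL1, ← mul_assoc, hCC, one_mul]
  have hLs2 : ∀ j, j ≠ i₁ → L.symm (X j) = X j := fun j hj => by
    apply L.injective
    rw [L.apply_symm_apply, hL2 j hj]
  constructor
  · have key : E2f.toAlgHom.comp Em2f.toAlgHom = AlgHom.id k _ := by
      apply MvPolynomial.algHom_ext
      intro j
      by_cases hj : j = i₁
      · subst hj
        simp only [AlgHom.coe_comp, AlgEquiv.toAlgHom_eq_coe, AlgHom.coe_coe,
          Function.comp_apply, AlgHom.id_apply]
        change E2f (Em2f (X j)) = X j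
        rw [hEm2f1, map_sub, hE2f1, map_mul, h2E, hE2ff]
        ring
      · simp [hEm2f2 j hj, hE2f2 j hj]
    apply AlgEquiv.ext
    intro p
    have := congrArg (fun φ => φ p) key
    simp only [AlgHom.coe_comp, AlgEquiv.toAlgHom_eq_coe, AlgHom.coe_coe,
      Function.comp_apply, AlgHom.id_apply] at this
    exact (E2f.symm_apply_apply (Em2f p)).symm.trans (congrArg E2f.symm this)
  · intro p
    have key : Ef.toAlgHom =
        (E2f.toAlgHom.comp (L.toAlgHom.comp (Em2f.toAlgHom.comp L.symm.toAlgHom))) := by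
      apply MvPolynomial.algHom_ext
      intro j
      simp only [AlgHom.coe_comp, AlgEquiv.toAlgHom_eq_coe, AlgHom.coe_coe,
        Function.comp_apply]
      change Ef (X j) = E2f (L (Em2f (L.symm (X j))))
      by_cases hj : j = i₁
      · subst hj
        rw [hEf1, hLs1]
        simp only [map_mul, map_sub, hCEm, hC, hCE, hEm2f1, hE2f1, hL1, h2E, h2L,
          hLf, hE2ff]
        linear_combination (-(X j + f)) * hCC
      · rw [hEf2 j hj, hLs2 j hj, hEm2f2 j hj, hL2 j hj, hE2f2 j hj]
    exact congrArg (fun φ => φ p) key
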